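/- For all integers a, b ≥ 0 and ν ≥ 3, the sequence W defined by W_1 = a+b, W_2 = (a+b)^2 + (2a+b), and W_ν = Σ_{k=1}^{ν} Σ_{j=0}^{k} a^j b^{k-j} C(k,j) C(ν+j-1, ν-k) satisfies the recurrence W_ν = (a+b+2) W_{ν-1} - (b+1) W_{ν-2}. -/

import Mathlib

open Finset

/-- colored part weight `a^j b^(k-j) C(k,j)` as an integer. -/
def ccTT (a b k j : ℕ) : ℤ := (a:ℤ)^j * (b:ℤ)^(k-j) * (Nat.choose k j)

/-- The double sum `S ν`. -/
def ccSS (a b n : ℕ) : ℤ :=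
  ∑ k ∈ Icc 1 n, ∑ j ∈ range (k+1), ccTT a b k j * (Nat.choose (n-1+j) (n-k) : ℤ)

def ccDD (a b n : ℕ) : ℤ :=
  ∑ k ∈ Icc 1 n, ∑ j ∈ range (k+1), ccTT a b k j * (Nat.choose (n-1+j) (n+1-k) : ℤ)

def ccEE (a b n : ℕ) : ℤ :=
  ∑ k ∈ Icc 1 (n+1), ∑ j ∈ range (k+1), ccTT a b k j * (Nat.choose (n-1+j) (n+2-k) : ℤ)

lemma ccTT_sum (a b k : ℕ) : ∑ j ∈ range (k+1), ccTT a b k j = ((a:ℤ)+b)^k := by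
  rw [add_pow]
  exact Finset.sum_congr rfl fun m _ => rfl

lemma ccL1 (a b n : ℕ) (hn : 1 ≤ n) :
    ccSS a b (n+1) = ccSS a b n + ccDD a b n + ((a:ℤ)+b)^(n+1) := by
  unfold ccSS ccDD
  rw [Finset.sum_Icc_succ_top (by omega : 1 ≤ n+1)]
  have htop : ∑ j ∈ range (n+1+1), ccTT a b (n+1) j * ((n+1-1+j).choose (n+1-(n+1)) : ℤ)
      = ((a:ℤ)+b)^(n+1) := by
    rw [← ccTT_sum a b (n+1)]
    refine Finset.sum_congr rfl fun j hj => ?_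
    simp
  rw [htop]
  have hmain : ∀ k ∈ Icc 1 n,
      (∑ j ∈ range (k+1), ccTT a b k j * ((n+1-1+j).choose (n+1-k) : ℤ))
      = (∑ j ∈ range (k+1), ccTT a b k j * ((n-1+j).choose (n-k) : ℤ))
        + ∑ j ∈ range (k+1), ccTT a b k j * ((n-1+j).choose (n+1-k) : ℤ) := by
    intro k hk
    rw [Finset.mem_Icc] at hk
    rw [← Finset.sum_add_distrib]
    refine Finset.sum_congr rfl fun j hj => ?_
    have e1 : n+1-1+j = (n-1+j) + 1 := by omega
    have e2 : n+1-k = (n-k) + 1 := by omega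
    rw [e1, e2, Nat.choose_succ_succ]
    push_cast
    ring
  rw [Finset.sum_congr rfl hmain, Finset.sum_add_distrib]

lemma ccL2 (a b n : ℕ) (hn : 1 ≤ n) :
    ccDD a b (n+1) = ccDD a b n + ((a:ℤ)+b)^(n+1) + ccEE a b n := by
  unfold ccDD ccEE
  have hmain : ∀ k ∈ Icc 1 (n+1),
      (∑ j ∈ range (k+1), ccTT a b k j * ((n+1-1+j).choose (n+1+1-k) : ℤ))
      = (∑ j ∈ range (k+1), ccTT a b k j * ((n-1+j).choose (n+1-k) : ℤ))
        + ∑ j ∈ range (k+1), ccTT a b k j * ((n-1+j).choose (n+2-k) : ℤ) := by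
    intro k hk
    rw [Finset.mem_Icc] at hk
    rw [← Finset.sum_add_distrib]
    refine Finset.sum_congr rfl fun j hj => ?_
    have e1 : n+1-1+j = (n-1+j) + 1 := by omega
    have e2 : n+1+1-k = (n+1-k) + 1 := by omega
    rw [e1, e2, Nat.choose_succ_succ]
    push_cast
    ring
  rw [Finset.sum_congr rfl hmain, Finset.sum_add_distrib,
    Finset.sum_Icc_succ_top (by omega : 1 ≤ n+1)
      (fun k => ∑ j ∈ range (k+1), ccTT a b k j * ((n-1+j).choose (n+1-k) : ℤ))]
  have htop : ∑ j ∈ range (n+1+1), ccTT a b (n+1) j * ((n-1+j).choose (n+1-(n+1)) : ℤ)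
      = ((a:ℤ)+b)^(n+1) := by
    rw [← ccTT_sum a b (n+1)]
    refine Finset.sum_congr rfl fun j hj => ?_
    simp
  rw [htop]

lemma ccPerK (a b n k : ℕ) (hk1 : 1 ≤ k) (hkn : k ≤ n) :
    (∑ j ∈ range (k+1+1), ccTT a b (k+1) j * ((n-1+j).choose (n+1-k) : ℤ))
    = ((a:ℤ)+b) * (∑ j ∈ range (k+1), ccTT a b k j * ((n-1+j).choose (n+1-k) : ℤ))
      + a * (∑ j ∈ range (k+1), ccTT a b k j * ((n-1+j).choose (n-k) : ℤ)) := by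
  have hX : ∀ j : ℕ, ((n-1+(j+1)).choose (n+1-k) : ℤ)
      = ((n-1+j).choose (n-k) : ℤ) + ((n-1+j).choose (n+1-k) : ℤ) := by
    intro j
    have e1 : n-1+(j+1) = (n-1+j)+1 := by omega
    have e2 : n+1-k = (n-k)+1 := by omega
    rw [e1, e2, Nat.choose_succ_succ]
    push_cast
    ring
  rw [Finset.sum_range_succ']
  have hterm : ∀ j ∈ range (k+1),
      ccTT a b (k+1) (j+1) * ((n-1+(j+1)).choose (n+1-k) : ℤ)
      = b * (ccTT a b k (j+1) * ((n-1+(j+1)).choose (n+1-k) : ℤ))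
        + (a * (ccTT a b k j * ((n-1+j).choose (n-k) : ℤ))
           + a * (ccTT a b k j * ((n-1+j).choose (n+1-k) : ℤ))) := by
    intro j hj
    rw [Finset.mem_range] at hj
    have htt : ccTT a b (k+1) (j+1) = b * ccTT a b k (j+1) + a * ccTT a b k j := by
      unfold ccTT
      have hc : (((k+1).choose (j+1) : ℕ) : ℤ) = (k.choose j : ℤ) + (k.choose (j+1) : ℤ) := by
        rw [Nat.choose_succ_succ]; push_cast; ring
      rw [show k+1-(j+1) = k-j from by omega, hc]
      rcases Nat.lt_or_ge j k with h | h
      · rw [show k-j = (k-(j+1))+1 from by omega]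
        ring
      · have hjk : j = k := by omega
        subst hjk
        simp [Nat.choose_succ_self]
        ring
    rw [htt, hX j]
    ring
  rw [Finset.sum_congr rfl hterm, Finset.sum_add_distrib]
  have hb : (∑ j ∈ range (k+1), b * (ccTT a b k (j+1) * ((n-1+(j+1)).choose (n+1-k) : ℤ)))
      + ccTT a b (k+1) 0 * ((n-1+0).choose (n+1-k) : ℤ)
      = b * ∑ j ∈ range (k+1), ccTT a b k j * ((n-1+j).choose (n+1-k) : ℤ) := by
    have h0 : ccTT a b (k+1) 0 = b * ccTT a b k 0 := by
      unfold ccTT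
      simp [pow_succ]
      ring
    rw [h0, ← Finset.mul_sum]
    have : (∑ j ∈ range (k+1), ccTT a b k (j+1) * ((n-1+(j+1)).choose (n+1-k) : ℤ))
        + ccTT a b k 0 * ((n-1+0).choose (n+1-k) : ℤ)
        = ∑ j ∈ range (k+1+1), ccTT a b k j * ((n-1+j).choose (n+1-k) : ℤ) :=
      (Finset.sum_range_succ' (fun j => ccTT a b k j * ((n-1+j).choose (n+1-k) : ℤ)) (k+1)).symm
    rw [mul_assoc, ← mul_add, this, Finset.sum_range_succ]
    have : ccTT a b k (k+1) = 0 := by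
      unfold ccTT
      simp [Nat.choose_succ_self]
    rw [this]
    ring
  rw [Finset.sum_add_distrib]
  rw [add_right_comm, hb, ← Finset.mul_sum, ← Finset.mul_sum]
  ring

lemma ccL3 (a b n : ℕ) (hn : 1 ≤ n) :
    ccEE a b n = ((a:ℤ)+b) * ccDD a b n + (a:ℤ) * ccSS a b n := by
  unfold ccEE ccDD ccSS
  rw [← Finset.insert_Icc_add_one_left_eq_Icc (by omega : 1 ≤ n+1), Finset.sum_insert (by simp)]
  have h1 : (∑ j ∈ range (1+1), ccTT a b 1 j * ((n-1+j).choose (n+2-1) : ℤ)) = 0 := by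
    have e0 : (n-1).choose (n+1) = 0 := Nat.choose_eq_zero_of_lt (by omega)
    have e1 : (n-1+1).choose (n+1) = 0 := Nat.choose_eq_zero_of_lt (by omega)
    simp [Finset.sum_range_succ, show n+2-1 = n+1 from by omega, e0, e1]
  rw [h1, zero_add]
  rw [← Finset.map_add_right_Icc 1 n 1, Finset.sum_map]
  have hmain : ∀ k ∈ Icc 1 n,
      (∑ j ∈ range ((addRightEmbedding 1) k + 1),
          ccTT a b ((addRightEmbedding 1) k) j *
            ((n-1+j).choose (n+2-(addRightEmbedding 1) k) : ℤ))
      = ((a:ℤ)+b) * (∑ j ∈ range (k+1), ccTT a b k j * ((n-1+j).choose (n+1-k) : ℤ))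
        + (a:ℤ) * (∑ j ∈ range (k+1), ccTT a b k j * ((n-1+j).choose (n-k) : ℤ)) := by
    intro k hk
    rw [Finset.mem_Icc] at hk
    have : (addRightEmbedding 1) k = k + 1 := rfl
    rw [this, show n+2-(k+1) = n+1-k from by omega]
    exact ccPerK a b n k hk.1 hk.2
  rw [Finset.sum_congr rfl hmain, Finset.sum_add_distrib, ← Finset.mul_sum, ← Finset.mul_sum]

lemma ccKey (a b n : ℕ) (hn : 1 ≤ n) :
    ccSS a b (n+2) = ((a:ℤ)+b+2) * ccSS a b (n+1) - ((b:ℤ)+1) * ccSS a b n := by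
  have l1 := ccL1 a b n hn
  have l1' := ccL1 a b (n+1) (by omega)
  have l2 := ccL2 a b n hn
  have l3 := ccL3 a b n hn
  have hq : ((a:ℤ)+b)^(n+1+1) = ((a:ℤ)+b) * ((a:ℤ)+b)^(n+1) := by ring
  rw [show n+2 = n+1+1 from rfl, l1', hq, l2, l3, l1]
  ring

lemma ccS1 (a b : ℕ) : ccSS a b 1 = (a:ℤ) + b := by
  unfold ccSS
  rw [Finset.Icc_self, Finset.sum_singleton]
  simp [ccTT, Finset.sum_range_succ]
  ring

lemma ccS2 (a b : ℕ) : ccSS a b 2 = ((a:ℤ)+b)^2 + (2*a+b) := by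
  unfold ccSS
  rw [show (2:ℕ) = 1+1 from rfl, Finset.sum_Icc_succ_top (by omega : 1 ≤ 1+1)]
  rw [Finset.Icc_self, Finset.sum_singleton]
  simp [ccTT, Finset.sum_range_succ]
  ring

lemma ccSum_eq (a b ν : ℕ) (hν : 1 ≤ ν) :
    (∑ k ∈ Finset.Icc 1 ν, ∑ j ∈ Finset.range (k + 1),
        (a : ℤ) ^ j * (b : ℤ) ^ (k - j) * (Nat.choose k j) *
          (Nat.choose (ν + j - 1) (ν - k))) = ccSS a b ν := by
  unfold ccSS ccTT
  refine Finset.sum_congr rfl fun k hk => Finset.sum_congr rfl fun j hj => ?_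
  rw [show ν + j - 1 = ν - 1 + j from by omega]

/-- The sequence `W`, counting `(an+b)`-color compositions of `ν`, given by the
initial values `W 1 = a+b`, `W 2 = (a+b)^2 + (2a+b)` and by the explicit double-sum
formula for `ν ≥ 3`, satisfies the recurrence
`W ν = (a+b+2) W (ν-1) - (b+1) W (ν-2)` for `ν ≥ 3`. -/
theorem colored_comp_recurrence (a b : ℕ) (W : ℕ → ℤ)
    (h1 : W 1 = (a : ℤ) + b)
    (h2 : W 2 = ((a : ℤ) + b) ^ 2 + (2 * a + b))
    (hW : ∀ ν, 3 ≤ ν → W ν =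
      ∑ k ∈ Finset.Icc 1 ν, ∑ j ∈ Finset.range (k + 1),
        (a : ℤ) ^ j * (b : ℤ) ^ (k - j) * (Nat.choose k j) *
          (Nat.choose (ν + j - 1) (ν - k)))
    (ν : ℕ) (hν : 3 ≤ ν) :
    W ν = ((a : ℤ) + b + 2) * W (ν - 1) - ((b : ℤ) + 1) * W (ν - 2) := by
  obtain ⟨n, rfl⟩ : ∃ n, ν = n + 2 := ⟨ν - 2, by omega⟩
  have hn : 1 ≤ n := by omega
  have hWeq : ∀ m, 3 ≤ m → W m = ccSS a b m := by
    intro m hm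
    rw [hW m hm]
    exact ccSum_eq a b m (by omega)
  have e2 : W (n+2) = ccSS a b (n+2) := hWeq _ (by omega)
  have e1 : W (n+1) = ccSS a b (n+1) := by
    rcases Nat.lt_or_ge n 2 with h | h
    · have : n = 1 := by omega
      subst this
      rw [h2, ccS2]
    · exact hWeq _ (by omega)
  have e0 : W n = ccSS a b n := by
    rcases Nat.lt_or_ge n 3 with h | h
    · interval_cases n
      · rw [h1, ccS1]
      · rw [h2, ccS2]
    · exact hWeq _ h
  rw [show n+2-1 = n+1 from by omega, show n+2-2 = n from by omega, e2, e1, e0]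
  exact ccKey a b n hn
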